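/- Let U be a finite 'balanced' subset of the dense local order 3-hypergraph (Z,E), i.e. for all distinct a,b ∈ U there exists x ∈ U∖{a,b} with {a,b,x} a non-edge. Then |U| is odd: if z ∈ U and z⁺ ∩ U has r elements, then |U| = 2r+1. -/

import Mathlib

open scoped Classical

/-- The dense local order on the circle: `x → y` iff the clockwise distance
from `x` to `y` is less than `π`. -/
def circTo (x y : AddCircle (2 * Real.pi)) : Prop :=
  ∃ t : ℝ, 0 < t ∧ t < Real.pi ∧ y = x + (t : AddCircle (2 * Real.pi))

/-- `R(x;y,z)` for the circular tournament. -/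
def circR (x y z : AddCircle (2 * Real.pi)) : Prop :=
  (circTo y x ∧ circTo y z ∧ circTo x z) ∨ (circTo z x ∧ circTo z y ∧ circTo x y)

/-- A 3-set is an edge iff it lies in an open semicircle. -/
def circEdge (x y z : AddCircle (2 * Real.pi)) : Prop :=
  circR x y z ∨ circR y x z ∨ circR z x y

noncomputable section

private lemma tpp : (0:ℝ) < 2 * Real.pi := by positivity

/-- representative in [0, 2π) -/
private def crep (u : AddCircle (2 * Real.pi)) : ℝ :=
  ((QuotientAddGroup.equivIcoMod tpp 0 u : Set.Ico (0:ℝ) (0 + 2*Real.pi)) : ℝ)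

private lemma crep_mem (u : AddCircle (2 * Real.pi)) : crep u ∈ Set.Ico (0:ℝ) (2*Real.pi) := by
  simp only [crep]
  obtain ⟨h0, h1⟩ := (QuotientAddGroup.equivIcoMod tpp 0 u).2
  exact ⟨h0, by linarith⟩

private lemma crep_coe (u : AddCircle (2 * Real.pi)) : ((crep u : ℝ) : AddCircle (2*Real.pi)) = u := by
  have := (QuotientAddGroup.equivIcoMod tpp 0).symm_apply_apply u
  rwa [QuotientAddGroup.equivIcoMod_symm_apply] at this

private lemma crep_coe' {t : ℝ} (h0 : 0 ≤ t) (h1 : t < 2*Real.pi) :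
    crep (t : AddCircle (2*Real.pi)) = t := by
  rw [crep, QuotientAddGroup.equivIcoMod_coe]
  exact (toIcoMod_eq_self tpp).mpr ⟨h0, by rwa [zero_add]⟩

private lemma crep_inj : Function.Injective crep := by
  intro a b h
  have := congrArg (fun t : ℝ => (t : AddCircle (2*Real.pi))) h
  simpa [crep_coe] using this

private lemma crep_zero : crep 0 = 0 := by
  have : ((0:ℝ) : AddCircle (2*Real.pi)) = 0 := by norm_cast
  rw [← this, crep_coe' le_rfl tpp]

private lemma eq_two_pi_of_coe_eq_zero {x : ℝ} (h0 : 0 < x) (h3 : x < 3 * Real.pi)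
    (hx : ((x:ℝ) : AddCircle (2*Real.pi)) = 0) : x = 2*Real.pi := by
  obtain ⟨n, hn⟩ := (AddCircle.coe_eq_zero_iff _).mp hx
  rw [zsmul_eq_mul] at hn
  have hπ := Real.pi_pos
  have h0n : (0:ℝ) < (n:ℝ) := by nlinarith
  have h2n : (n:ℝ) < 2 := by nlinarith
  have : n = 1 := by
    have l1 : 0 < n := by exact_mod_cast h0n
    have l2 : n < 2 := by exact_mod_cast h2n
    omega
  rw [this] at hn
  push_cast at hn
  linarith

private lemma circTo_iff {x y : AddCircle (2 * Real.pi)} :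
    circTo x y ↔ 0 < crep (y - x) ∧ crep (y - x) < Real.pi := by
  constructor
  · rintro ⟨t, h0, h1, rfl⟩
    rw [add_sub_cancel_left, crep_coe' h0.le (by linarith [Real.pi_pos])]
    exact ⟨h0, h1⟩
  · rintro ⟨h0, h1⟩
    exact ⟨crep (y - x), h0, h1, by rw [crep_coe]; abel⟩

private lemma crep_neg {x : AddCircle (2 * Real.pi)} (hx : x ≠ 0) :
    crep (-x) = 2 * Real.pi - crep x := by
  have h1 : crep x ≠ 0 := by
    intro h
    apply hx
    rw [← crep_coe x, h]
    norm_cast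
  obtain ⟨h2a, h2b⟩ := crep_mem x
  have h2c : 0 < crep x := h2a.lt_of_ne (Ne.symm h1)
  have key : ((2 * Real.pi - crep x : ℝ) : AddCircle (2 * Real.pi)) = -x := by
    rw [AddCircle.coe_sub, crep_coe, AddCircle.coe_period]
    abel
  rw [← key, crep_coe' (by linarith) (by linarith)]

private lemma circTo_total {x y : AddCircle (2 * Real.pi)} (hxy : x ≠ y)
    (h1 : y ≠ x + ((Real.pi : ℝ) : AddCircle (2 * Real.pi))) :
    circTo x y ∨ circTo y x := by
  have hne : y - x ≠ 0 := sub_ne_zero.mpr (Ne.symm hxy)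
  have hpi : crep (y - x) ≠ Real.pi := by
    intro h
    have hc := crep_coe (y - x)
    rw [h] at hc
    exact h1 (sub_eq_iff_eq_add'.mp hc.symm)
  obtain ⟨hm1, hm2⟩ := crep_mem (y - x)
  have h0 : 0 < crep (y - x) := by
    rcases hm1.lt_or_eq with h | h
    · exact h
    · exfalso; apply hne; rw [← crep_coe (y - x), ← h]; norm_cast
  rcases lt_trichotomy (crep (y - x)) Real.pi with h | h | h
  · exact Or.inl (circTo_iff.mpr ⟨h0, h⟩)
  · exact absurd h hpi
  · refine Or.inr (circTo_iff.mpr ?_)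
    have hxy' : x - y = -(y - x) := by abel
    rw [hxy', crep_neg hne]
    constructor <;> linarith

private lemma nonedge {a b c : AddCircle (2 * Real.pi)} (hab : circTo a b)
    (hca : c ≠ a) (hcb : c ≠ b)
    (hac' : c ≠ a + ((Real.pi : ℝ) : AddCircle (2 * Real.pi)))
    (hbc' : c ≠ b + ((Real.pi : ℝ) : AddCircle (2 * Real.pi)))
    (hca' : a ≠ c + ((Real.pi : ℝ) : AddCircle (2 * Real.pi)))
    (hne : ¬ circEdge a b c) : circTo b c ∧ circTo c a := by
  have hbc : circTo b c := by
    by_contra hn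
    have hcb2 : circTo c b := (circTo_total (Ne.symm hcb) hbc').resolve_left hn
    rcases circTo_total (Ne.symm hca) hac' with hac | hca2
    · exact hne (Or.inr (Or.inr (Or.inl ⟨hac, hab, hcb2⟩)))
    · exact hne (Or.inl (Or.inr ⟨hca2, hcb2, hab⟩))
  refine ⟨hbc, ?_⟩
  by_contra hn
  have hac : circTo a c := (circTo_total hca hca').resolve_left hn
  exact hne (Or.inr (Or.inl (Or.inl ⟨hab, hac, hbc⟩)))

/-- the next element of `S` after `s`, or `2π` -/
private def nxt (S : Finset ℝ) (s : ℝ) : ℝ :=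
  if h : (S.filter (fun t => s < t)).Nonempty then (S.filter (fun t => s < t)).min' h
  else 2 * Real.pi

private lemma nxt_gt {S : Finset ℝ} {s : ℝ} (hs2 : s < 2 * Real.pi) : s < nxt S s := by
  rw [nxt]
  split_ifs with h
  · exact (Finset.mem_filter.mp ((S.filter (fun t => s < t)).min'_mem h)).2
  · exact hs2

private lemma nxt_le {S : Finset ℝ} {s t : ℝ} (ht : t ∈ S) (hst : s < t) : nxt S s ≤ t := by
  rw [nxt]
  have hne : (S.filter (fun r => s < r)).Nonempty := ⟨t, Finset.mem_filter.mpr ⟨ht, hst⟩⟩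
  rw [dif_pos hne]
  exact Finset.min'_le _ _ (Finset.mem_filter.mpr ⟨ht, hst⟩)

private lemma nxt_le2 {S : Finset ℝ} {s : ℝ} (hS : ∀ t ∈ S, t < 2 * Real.pi) :
    nxt S s ≤ 2 * Real.pi := by
  rw [nxt]
  split_ifs with h
  · exact (hS _ (Finset.mem_filter.mp ((S.filter (fun t => s < t)).min'_mem h)).1).le
  · exact le_rfl

private lemma nxt_mem {S : Finset ℝ} {s : ℝ} : nxt S s = 2 * Real.pi ∨ nxt S s ∈ S := by
  rw [nxt]
  split_ifs with h
  · exact Or.inr (Finset.mem_filter.mp ((S.filter (fun t => s < t)).min'_mem h)).1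
  · exact Or.inl rfl

private lemma nxt_gap {S : Finset ℝ} {s t : ℝ} (ht : t ∈ S) : ¬(s < t ∧ t < nxt S s) := by
  rintro ⟨h1, h2⟩
  exact absurd (nxt_le ht h1) (not_le.mpr h2)

/-- A finite balanced subset `U` of the dense local order
3-hypergraph has odd size: for any `z ∈ U`, if `z⁺ ∩ U` has `r` elements
then `|U| = 2r + 1`. -/
theorem stmt11 (Z : Set (AddCircle (2 * Real.pi)))
    (hZcount : Z.Countable) (hZdense : Dense Z)
    (hanti : ∀ x ∈ Z, ∀ y ∈ Z,
      y ≠ x + ((Real.pi : ℝ) : AddCircle (2 * Real.pi)))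
    (U : Finset (AddCircle (2 * Real.pi))) (hUZ : ↑U ⊆ Z)
    (hbal : ∀ a ∈ U, ∀ b ∈ U, a ≠ b →
      ∃ x ∈ U, x ≠ a ∧ x ≠ b ∧ ¬ circEdge a b x) :
    ∀ z ∈ U, U.card = 2 * (U.filter (fun y => circTo z y)).card + 1 := by
  intro z hz
  have hπ := Real.pi_pos
  have hA : ∀ u ∈ U, ∀ v ∈ U, u ≠ v + ((Real.pi : ℝ) : AddCircle (2 * Real.pi)) :=
    fun u hu v hv => hanti v (hUZ hv) u (hUZ hu)
  have hππ : (((Real.pi:ℝ) : AddCircle (2 * Real.pi)) + ((Real.pi:ℝ) : AddCircle (2 * Real.pi))) = 0 := by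
    rw [← AddCircle.coe_add, show Real.pi + Real.pi = 2 * Real.pi by ring]
    exact AddCircle.coe_period (2 * Real.pi)
  set S : Finset ℝ := U.image (fun u => crep (u - z)) with hSdef
  set S' : Finset ℝ :=
    U.image (fun u => crep (u - z + ((Real.pi : ℝ) : AddCircle (2 * Real.pi)))) with hS'def
  have hSm : ∀ {s : ℝ}, s ∈ S ↔ ∃ u ∈ U, crep (u - z) = s := by
    intro s; rw [hSdef, Finset.mem_image]
  have hS'm : ∀ {s : ℝ},
      s ∈ S' ↔ ∃ u ∈ U, crep (u - z + ((Real.pi : ℝ) : AddCircle (2 * Real.pi))) = s := by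
    intro s; rw [hS'def, Finset.mem_image]
  have hSrange : ∀ s ∈ S, 0 ≤ s ∧ s < 2 * Real.pi := by
    intro s hs; obtain ⟨u, _, rfl⟩ := hSm.mp hs; exact ⟨(crep_mem _).1, (crep_mem _).2⟩
  have hS'range : ∀ s ∈ S', 0 ≤ s ∧ s < 2 * Real.pi := by
    intro s hs; obtain ⟨u, _, rfl⟩ := hS'm.mp hs; exact ⟨(crep_mem _).1, (crep_mem _).2⟩
  have hinj1 : Function.Injective (fun u : AddCircle (2 * Real.pi) => crep (u - z)) := by
    intro a b h
    exact sub_left_injective (crep_inj h)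
  have hinj2 : Function.Injective
      (fun u : AddCircle (2 * Real.pi) =>
        crep (u - z + ((Real.pi : ℝ) : AddCircle (2 * Real.pi)))) := by
    intro a b h
    exact sub_left_injective (add_left_injective _ (crep_inj h))
  have hScard : S.card = U.card := Finset.card_image_of_injective _ hinj1
  have hS'card : S'.card = U.card := Finset.card_image_of_injective _ hinj2
  have hzero : (0:ℝ) ∈ S := hSm.mpr ⟨z, hz, by rw [sub_self, crep_zero]⟩
  have hpiS' : Real.pi ∈ S' := hS'm.mpr ⟨z, hz, by
    rw [sub_self, zero_add, crep_coe' hπ.le (by linarith)]⟩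
  have hpiS : Real.pi ∉ S := by
    intro h
    obtain ⟨u, hu, hcu⟩ := hSm.mp h
    have h2 : u - z = ((Real.pi : ℝ) : AddCircle (2 * Real.pi)) := by
      rw [← crep_coe (u - z), hcu]
    exact hA u hu z hz (sub_eq_iff_eq_add'.mp h2)
  have hzeroS' : (0:ℝ) ∉ S' := by
    intro h
    obtain ⟨u, hu, hcu⟩ := hS'm.mp h
    have h2 : u - z + ((Real.pi : ℝ) : AddCircle (2 * Real.pi)) = 0 := by
      rw [← crep_coe (u - z + _), hcu]; norm_cast
    have h4 : u - (z + ((Real.pi : ℝ) : AddCircle (2 * Real.pi)))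
        = (u - z + ((Real.pi : ℝ) : AddCircle (2 * Real.pi)))
          - (((Real.pi:ℝ) : AddCircle (2 * Real.pi)) + ((Real.pi:ℝ) : AddCircle (2 * Real.pi))) := by
      abel
    rw [h2, hππ, sub_zero] at h4
    exact hA u hu z hz (sub_eq_zero.mp h4)
  have hdisj : ∀ v ∈ S', v ∉ S := by
    intro v hv hvS
    obtain ⟨u, hu, hcu⟩ := hS'm.mp hv
    obtain ⟨u', hu', hcu'⟩ := hSm.mp hvS
    have h2 : u - z + ((Real.pi : ℝ) : AddCircle (2 * Real.pi)) = u' - z :=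
      crep_inj (hcu.trans hcu'.symm)
    have h4 : u' - (u + ((Real.pi : ℝ) : AddCircle (2 * Real.pi)))
        = (u' - z) - (u - z + ((Real.pi : ℝ) : AddCircle (2 * Real.pi))) := by abel
    rw [← h2, sub_self] at h4
    exact hA u' hu' u hu (sub_eq_zero.mp h4)
  -- the key lemma: an interval containing no point of S contains at most one point of S'
  have noTwo : ∀ a b : ℝ, 0 ≤ a → b ≤ 2 * Real.pi →
      (∀ t ∈ S, ¬(a < t ∧ t < b)) →
      ∀ v₁ ∈ S', ∀ v₂ ∈ S', a < v₁ → v₁ < v₂ → v₂ < b → False := by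
    intro a b ha hb hgap v₁ hv₁ v₂ hv₂ hav₁ hlt hv₂b
    obtain ⟨u₁, hu₁, hc₁⟩ := hS'm.mp hv₁
    obtain ⟨u₂, hu₂, hc₂⟩ := hS'm.mp hv₂
    have hw₁ : ((v₁:ℝ) : AddCircle (2 * Real.pi))
        = u₁ - z + ((Real.pi : ℝ) : AddCircle (2 * Real.pi)) := by rw [← hc₁, crep_coe]
    have hw₂ : ((v₂:ℝ) : AddCircle (2 * Real.pi))
        = u₂ - z + ((Real.pi : ℝ) : AddCircle (2 * Real.pi)) := by rw [← hc₂, crep_coe]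
    have hδ : u₂ - u₁ = ((v₂ - v₁ : ℝ) : AddCircle (2 * Real.pi)) := by
      rw [AddCircle.coe_sub, hw₁, hw₂]; abel
    have hδ0 : 0 < v₂ - v₁ := by linarith
    have hδπ : v₂ - v₁ < Real.pi := by
      by_contra hge
      push_neg at hge
      have hm : crep (u₂ - z) = v₂ - Real.pi := by
        have he : u₂ - z = ((v₂ - Real.pi : ℝ) : AddCircle (2 * Real.pi)) := by
          rw [AddCircle.coe_sub, hw₂]; abel
        rw [he, crep_coe' (by linarith) (by linarith)]
      exact hgap (v₂ - Real.pi) (hSm.mpr ⟨u₂, hu₂, hm⟩) ⟨by linarith, by linarith⟩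
    have hu12 : u₁ ≠ u₂ := by
      intro h
      apply hlt.ne
      rw [← hc₁, ← hc₂, h]
    have h12 : circTo u₁ u₂ := ⟨v₂ - v₁, hδ0, hδπ, by rw [← hδ]; abel⟩
    obtain ⟨c, hc, hcu₁, hcu₂, hnE⟩ := hbal u₁ hu₁ u₂ hu₂ hu12
    obtain ⟨hbc, hca⟩ := nonedge h12 hcu₁ hcu₂ (hA c hc u₁ hu₁) (hA c hc u₂ hu₂)
      (hA u₁ hu₁ c hc) hnE
    obtain ⟨s', hs'0, hs'π, hceq⟩ := hbc
    obtain ⟨r, hr0, hrπ, hueq⟩ := hca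
    have hu2eq : u₂ = u₁ + ((v₂ - v₁ : ℝ) : AddCircle (2 * Real.pi)) := by
      rw [← hδ]; abel
    have hloop : u₁ = u₁ + (((v₂ - v₁ : ℝ) : AddCircle (2 * Real.pi))
        + ((s' : ℝ) : AddCircle (2 * Real.pi)) + ((r : ℝ) : AddCircle (2 * Real.pi))) := by
      conv_lhs => rw [hueq, hceq, hu2eq]
      abel
    have hzero' : (((v₂ - v₁ : ℝ) : AddCircle (2 * Real.pi))
        + ((s' : ℝ) : AddCircle (2 * Real.pi)) + ((r : ℝ) : AddCircle (2 * Real.pi))) = 0 :=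
      (left_eq_add.mp hloop)
    have hsum : ((v₂ - v₁ + s' + r : ℝ) : AddCircle (2 * Real.pi)) = 0 := by
      rw [AddCircle.coe_add, AddCircle.coe_add]
      exact hzero'
    have h2π : v₂ - v₁ + s' + r = 2 * Real.pi :=
      eq_two_pi_of_coe_eq_zero (by linarith) (by linarith) hsum
    have hq : crep (c - z) = v₂ + s' - Real.pi := by
      have he : c - z = ((v₂ + s' - Real.pi : ℝ) : AddCircle (2 * Real.pi)) := by
        rw [AddCircle.coe_sub, AddCircle.coe_add, hw₂, hceq]
        abel
      rw [he, crep_coe' (by linarith) (by linarith)]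
    exact hgap (v₂ + s' - Real.pi) (hSm.mpr ⟨c, hc, hq⟩) ⟨by linarith, by linarith⟩
  -- at most one point of S' in each gap of S
  have key1 : ∀ s ∈ S, (S'.filter (fun v => s < v ∧ v < nxt S s)).card ≤ 1 := by
    intro s hs
    rw [Finset.card_le_one]
    intro v₁ h1 v₂ h2
    obtain ⟨hv₁S', hsv₁, hv₁n⟩ := Finset.mem_filter.mp h1
    obtain ⟨hv₂S', hsv₂, hv₂n⟩ := Finset.mem_filter.mp h2
    by_contra hne
    have hgap : ∀ t ∈ S, ¬(s < t ∧ t < nxt S s) := fun t ht => nxt_gap ht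
    rcases lt_or_gt_of_ne hne with h | h
    · exact noTwo s (nxt S s) (hSrange s hs).1 (nxt_le2 (fun t ht => (hSrange t ht).2))
        hgap v₁ hv₁S' v₂ hv₂S' hsv₁ h hv₂n
    · exact noTwo s (nxt S s) (hSrange s hs).1 (nxt_le2 (fun t ht => (hSrange t ht).2))
        hgap v₂ hv₂S' v₁ hv₁S' hsv₂ h hv₁n
  -- the gaps cover S'
  have hcover : S' = S.biUnion (fun s => S'.filter (fun v => s < v ∧ v < nxt S s)) := by
    apply Finset.ext
    intro v
    simp only [Finset.mem_biUnion, Finset.mem_filter]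
    constructor
    · intro hv
      have hv0 : 0 < v := lt_of_le_of_ne (hS'range v hv).1
        (by intro h; exact hzeroS' (h ▸ hv))
      have hne : (S.filter (fun t => t < v)).Nonempty :=
        ⟨0, Finset.mem_filter.mpr ⟨hzero, hv0⟩⟩
      set s := (S.filter (fun t => t < v)).max' hne with hsdef
      have hsmem := (S.filter (fun t => t < v)).max'_mem hne
      have hsS : s ∈ S := (Finset.mem_filter.mp hsmem).1
      have hsv : s < v := (Finset.mem_filter.mp hsmem).2
      refine ⟨s, hsS, hv, hsv, ?_⟩
      by_contra hle
      push_neg at hle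
      rcases nxt_mem (S := S) (s := s) with h2 | hmem
      · have := (hS'range v hv).2
        rw [h2] at hle
        linarith
      · have h2 : nxt S s ≠ v := by intro h; exact hdisj v hv (h ▸ hmem)
        have h3 : nxt S s < v := lt_of_le_of_ne hle h2
        have h4 : nxt S s ≤ (S.filter (fun t => t < v)).max' hne :=
          Finset.le_max' _ _
            (show nxt S s ∈ S.filter (fun t => t < v) from Finset.mem_filter.mpr ⟨hmem, h3⟩)
        rw [← hsdef] at h4
        have h5 : s < nxt S s := nxt_gt (hSrange s hsS).2
        linarith
    · rintro ⟨s, _, hv, _⟩; exact hv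
  -- gaps are pairwise disjoint
  have hdG : ∀ s₁ ∈ S, ∀ s₂ ∈ S, s₁ ≠ s₂ →
      Disjoint (S'.filter (fun v => s₁ < v ∧ v < nxt S s₁))
        (S'.filter (fun v => s₂ < v ∧ v < nxt S s₂)) := by
    have base : ∀ s₁ s₂ : ℝ, s₂ ∈ S → s₁ < s₂ → ∀ v : ℝ,
        (s₁ < v ∧ v < nxt S s₁) → (s₂ < v ∧ v < nxt S s₂) → False := by
      rintro s₁ s₂ h₂ hlt v ⟨_, hb⟩ ⟨hc, _⟩
      have := nxt_le h₂ hlt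
      linarith
    intro s₁ h₁ s₂ h₂ hne
    rw [Finset.disjoint_left]
    intro v hv1 hv2
    obtain ⟨_, hp1⟩ := Finset.mem_filter.mp hv1
    obtain ⟨_, hp2⟩ := Finset.mem_filter.mp hv2
    rcases lt_or_gt_of_ne hne with h | h
    · exact base s₁ s₂ h₂ h v hp1 hp2
    · exact base s₂ s₁ h₁ h v hp2 hp1
  have hsum1 : ∑ s ∈ S, (S'.filter (fun v => s < v ∧ v < nxt S s)).card = S.card := by
    rw [← Finset.card_biUnion hdG, ← hcover, hS'card, hScard]
  -- each gap contains exactly one point of S'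
  have key2 : ∀ s ∈ S, (S'.filter (fun v => s < v ∧ v < nxt S s)).card = 1 := by
    by_contra hcon
    push_neg at hcon
    obtain ⟨s₀, hs₀, hne⟩ := hcon
    have hlt : (S'.filter (fun v => s₀ < v ∧ v < nxt S s₀)).card < 1 :=
      lt_of_le_of_ne (key1 s₀ hs₀) hne
    have hstrict : ∑ s ∈ S, (S'.filter (fun v => s < v ∧ v < nxt S s)).card
        < ∑ _s ∈ S, 1 :=
      Finset.sum_lt_sum (fun i hi => key1 i hi) ⟨s₀, hs₀, hlt⟩
    rw [Finset.sum_const, smul_eq_mul, mul_one, hsum1] at hstrict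
    exact absurd hstrict (lt_irrefl _)
  -- count the points of S' below π, gap by gap
  have hsplitsum : (S'.filter (fun v => v < Real.pi)).card
      = ∑ s ∈ S,
          ((S'.filter (fun v => s < v ∧ v < nxt S s)).filter (fun v => v < Real.pi)).card := by
    conv_lhs => rw [hcover]
    rw [Finset.filter_biUnion]
    exact Finset.card_biUnion (fun s₁ h₁ s₂ h₂ hne =>
      (hdG s₁ h₁ s₂ h₂ hne).mono (Finset.filter_subset _ _) (Finset.filter_subset _ _))
  have hterm : ∀ s ∈ S,
      ((S'.filter (fun v => s < v ∧ v < nxt S s)).filter (fun v => v < Real.pi)).card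
        = if nxt S s < Real.pi then 1 else 0 := by
    intro s hs
    obtain ⟨v₀, hv₀⟩ := Finset.card_eq_one.mp (key2 s hs)
    have hv₀mem : v₀ ∈ S'.filter (fun v => s < v ∧ v < nxt S s) := by
      rw [hv₀]; exact Finset.mem_singleton_self v₀
    obtain ⟨hv₀S', hsv₀, hv₀n⟩ := Finset.mem_filter.mp hv₀mem
    rw [hv₀, Finset.filter_singleton]
    by_cases hn : nxt S s < Real.pi
    · rw [if_pos (lt_trans hv₀n hn), if_pos hn, Finset.card_singleton]
    · rw [if_neg hn]
      suffices hnv : ¬ v₀ < Real.pi by rw [if_neg hnv]; exact Finset.card_empty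
      intro hv₀π
      have hsπ : s < Real.pi := lt_trans hsv₀ hv₀π
      have hnπ : Real.pi < nxt S s := by
        rcases nxt_mem (S := S) (s := s) with h2 | hmem
        · rw [h2]; linarith
        · have hne2 : nxt S s ≠ Real.pi := by intro h; exact hpiS (h ▸ hmem)
          exact lt_of_le_of_ne (not_lt.mp hn) (Ne.symm hne2)
      have hπmem : Real.pi ∈ S'.filter (fun v => s < v ∧ v < nxt S s) :=
        Finset.mem_filter.mpr ⟨hpiS', hsπ, hnπ⟩
      rw [hv₀, Finset.mem_singleton] at hπmem
      rw [← hπmem] at hv₀π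
      exact lt_irrefl _ hv₀π
  have hcount1 : (S'.filter (fun v => v < Real.pi)).card
      = (S.filter (fun s => nxt S s < Real.pi)).card := by
    have h1 := Finset.sum_congr rfl hterm
    rw [hsplitsum, h1, ← Finset.card_filter]
  -- the filter `nxt < π` is the filter `< π` minus its max
  have hne0 : (S.filter (fun t => t < Real.pi)).Nonempty :=
    ⟨0, Finset.mem_filter.mpr ⟨hzero, hπ⟩⟩
  have hs₀mem := (S.filter (fun t => t < Real.pi)).max'_mem hne0
  have hs₀S : (S.filter (fun t => t < Real.pi)).max' hne0 ∈ S :=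
    (Finset.mem_filter.mp hs₀mem).1
  have hs₀π : (S.filter (fun t => t < Real.pi)).max' hne0 < Real.pi :=
    (Finset.mem_filter.mp hs₀mem).2
  have hfilter_eq : S.filter (fun s => nxt S s < Real.pi)
      = (S.filter (fun t => t < Real.pi)).erase ((S.filter (fun t => t < Real.pi)).max' hne0) := by
    ext t
    simp only [Finset.mem_erase, Finset.mem_filter]
    constructor
    · rintro ⟨htS, hn⟩
      have h1 : t < Real.pi := lt_trans (nxt_gt (hSrange t htS).2) hn
      refine ⟨?_, htS, h1⟩
      intro heq
      rcases nxt_mem (S := S) (s := t) with h2 | hmem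
      · rw [h2] at hn; linarith
      · have h3 : nxt S t ≤ (S.filter (fun r => r < Real.pi)).max' hne0 :=
          Finset.le_max' _ _
            (show nxt S t ∈ S.filter (fun r => r < Real.pi) from
              Finset.mem_filter.mpr ⟨hmem, hn⟩)
        have h4 : t < nxt S t := nxt_gt (hSrange t htS).2
        rw [← heq] at h3
        linarith
    · rintro ⟨hne', htS, htπ⟩
      refine ⟨htS, ?_⟩
      have h2 : t ≤ (S.filter (fun r => r < Real.pi)).max' hne0 :=
        Finset.le_max' _ _
          (show t ∈ S.filter (fun r => r < Real.pi) from Finset.mem_filter.mpr ⟨htS, htπ⟩)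
      have h3 : t < (S.filter (fun r => r < Real.pi)).max' hne0 := lt_of_le_of_ne h2 hne'
      have h4 := nxt_le hs₀S h3
      linarith
  -- relate the count below π in S to the goal
  have himg : S.filter (fun t => 0 < t ∧ t < Real.pi)
      = (U.filter (fun y => circTo z y)).image (fun u => crep (u - z)) := by
    rw [hSdef, Finset.filter_image]
    congr 1
    apply Finset.filter_congr
    intro u _
    have := circTo_iff (x := z) (y := u)
    constructor
    · intro h; exact this.mpr h
    · intro h; exact this.mp h
  have hk : (S.filter (fun t => 0 < t ∧ t < Real.pi)).card
      = (U.filter (fun y => circTo z y)).card := by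
    rw [himg, Finset.card_image_of_injective _ hinj1]
  have hsplitπ : (S.filter (fun t => t < Real.pi)).card
      = (S.filter (fun t => 0 < t ∧ t < Real.pi)).card + 1 := by
    have heq : S.filter (fun t => t < Real.pi)
        = insert 0 (S.filter (fun t => 0 < t ∧ t < Real.pi)) := by
      ext t
      simp only [Finset.mem_insert, Finset.mem_filter]
      constructor
      · rintro ⟨ht, hπt⟩
        rcases (hSrange t ht).1.lt_or_eq with h | h
        · exact Or.inr ⟨ht, h, hπt⟩
        · exact Or.inl h.symm
      · rintro (rfl | ⟨ht, _, hπt⟩)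
        · exact ⟨hzero, hπ⟩
        · exact ⟨ht, hπt⟩
    rw [heq, Finset.card_insert_of_notMem]
    intro h
    exact lt_irrefl (0:ℝ) (Finset.mem_filter.mp h).2.1
  -- points of S above π correspond to points of S' below π
  have hcount3 : (S.filter (fun t => Real.pi < t)).card
      = (S'.filter (fun v => v < Real.pi)).card := by
    apply Finset.card_nbij' (fun t => t - Real.pi) (fun v => v + Real.pi)
    · intro t ht
      obtain ⟨htS, hπt⟩ := Finset.mem_filter.mp ht
      obtain ⟨u, hu, hcu⟩ := hSm.mp htS
      have ht2 := (hSrange t htS).2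
      have he : u - z + ((Real.pi : ℝ) : AddCircle (2 * Real.pi))
          = ((t - Real.pi : ℝ) : AddCircle (2 * Real.pi)) := by
        have hcu2 : ((t : ℝ) : AddCircle (2 * Real.pi)) = u - z := by rw [← hcu, crep_coe]
        have hnegπ : -((Real.pi:ℝ) : AddCircle (2 * Real.pi))
            = ((Real.pi:ℝ) : AddCircle (2 * Real.pi)) := by
          rw [neg_eq_iff_add_eq_zero]; exact hππ
        rw [AddCircle.coe_sub, hcu2,
          sub_eq_add_neg (u - z) (((Real.pi:ℝ)) : AddCircle (2 * Real.pi)), hnegπ]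
      refine Finset.mem_filter.mpr ⟨hS'm.mpr ⟨u, hu, ?_⟩, by linarith⟩
      rw [he, crep_coe' (by linarith) (by linarith)]
    · intro v hv
      obtain ⟨hvS', hvπ⟩ := Finset.mem_filter.mp hv
      obtain ⟨u, hu, hcu⟩ := hS'm.mp hvS'
      have hv0 : 0 < v := lt_of_le_of_ne (hS'range v hvS').1
        (by intro h; exact hzeroS' (h ▸ hvS'))
      have he : u - z = ((v + Real.pi : ℝ) : AddCircle (2 * Real.pi)) := by
        have hcu2 : ((v : ℝ) : AddCircle (2 * Real.pi))
            = u - z + ((Real.pi : ℝ) : AddCircle (2 * Real.pi)) := by rw [← hcu, crep_coe]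
        rw [AddCircle.coe_add, hcu2]
        rw [add_assoc, hππ, add_zero]
      refine Finset.mem_filter.mpr ⟨hSm.mpr ⟨u, hu, ?_⟩, by linarith⟩
      rw [he, crep_coe' (by linarith) (by linarith)]
    · intro a _; ring
    · intro a _; ring
  -- split S at π
  have hsplitS : S.card = (S.filter (fun t => t < Real.pi)).card
      + (S.filter (fun t => Real.pi < t)).card := by
    have h1 := Finset.card_filter_add_card_filter_not
      (s := S) (p := fun t => t < Real.pi)
    have h2 : S.filter (fun t => ¬ t < Real.pi) = S.filter (fun t => Real.pi < t) := by
      apply Finset.filter_congr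
      intro t ht
      constructor
      · intro h
        exact lt_of_le_of_ne (not_lt.mp h) (by intro hh; exact hpiS (hh ▸ ht))
      · intro h
        exact not_lt.mpr h.le
    rw [h2] at h1
    omega
  -- final arithmetic
  have hUS : U.card = S.card := hScard.symm
  have e2 : (S.filter (fun s => nxt S s < Real.pi)).card
      = (S.filter (fun t => t < Real.pi)).card - 1 := by
    rw [hfilter_eq, Finset.card_erase_of_mem hs₀mem]
  have hne0' : 1 ≤ (S.filter (fun t => t < Real.pi)).card :=
    Finset.card_pos.mpr hne0
  omega
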